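/- For every m ∈ {1, …, r}, the set ℋ_m ⊆ 𝓑 has exactly (r−1)! elements and is a diagonal basis. -/

import Mathlib

open scoped BigOperators

attribute [local instance] Classical.propDecidable

noncomputable section

namespace Verlinde


variable {r : ℕ}

/-- The root `α^{ij} = e_i - e_j`, viewed as the linear functional `x_i - x_j`. -/
def stdRoot (r : ℕ) (i j : Fin r) : Fin r → ℝ :=
  fun t => (if t = i then 1 else 0) - (if t = j then 1 else 0)

/-- `B ∈ 𝓑`: an ordered tuple of roots forming a linear basis of
`V* = {a : ∑ i, a i = 0}`. -/
def IsOB (r : ℕ) (B : Fin (r - 1) → Fin r → ℝ) : Prop :=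
  (∀ m, ∃ i j, i ≠ j ∧ B m = stdRoot r i j) ∧
    LinearIndependent ℝ B ∧
    ∀ a : Fin r → ℝ, (∑ i, a i) = 0 → a ∈ Submodule.span ℝ (Set.range B)

/-- Coordinates of `a` with respect to the tuple `B` (junk unless such
coordinates exist; they are unique when `B` is linearly independent). -/
def coordsOf (B : Fin (r - 1) → Fin r → ℝ) (a : Fin r → ℝ) : Fin (r - 1) → ℝ :=
  if h : ∃ c : Fin (r - 1) → ℝ, a = ∑ j, c j • B j then h.choose else 0

/-- The integer part `[a]_B ∈ Λ`. -/
def intPart (B : Fin (r - 1) → Fin r → ℝ) (a : Fin r → ℝ) : Fin r → ℝ :=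
  ∑ j, (⌊coordsOf B a j⌋ : ℝ) • B j

/-- The fractional part `{a}_B`. -/
def fracPart (B : Fin (r - 1) → Fin r → ℝ) (a : Fin r → ℝ) : Fin r → ℝ :=
  a - intPart B a

/-- `a ∈ V*` is regular if all its `B`-coordinates are non-integral, for every `B ∈ 𝓑`,
i.e. `{a}_B ∈ ∑_j (0,1)·β^{[j]}` for every `B ∈ 𝓑`. -/
def IsRegular (r : ℕ) (a : Fin r → ℝ) : Prop :=
  ∀ B, IsOB r B → ∀ j, Int.fract (coordsOf B a j) ≠ 0

/-- The flag `Fl(B)`: `Fl(B) j = span (β^{[j]}, …, β^{[r-1]})`. -/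
def flagOf (B : Fin (r - 1) → Fin r → ℝ) : Fin (r - 1) → Submodule ℝ (Fin r → ℝ) :=
  fun j => Submodule.span ℝ {x | ∃ i, j ≤ i ∧ B i = x}

/-- `B ⊣ C`. -/
def Dashv (B C : Fin (r - 1) → Fin r → ℝ) : Prop :=
  ∀ τ : Equiv.Perm (Fin (r - 1)), flagOf (B ∘ τ) ≠ flagOf C

/-- A diagonal basis: a subset of `𝓑` of cardinality `(r-1)!` any two distinct
members of which satisfy `B ⊣ C`. -/
def IsDiagonalBasis (r : ℕ) (D : Finset (Fin (r - 1) → Fin r → ℝ)) : Prop :=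
  D.card = (r - 1).factorial ∧ (∀ B ∈ D, IsOB r B) ∧
    ∀ B ∈ D, ∀ C ∈ D, B ≠ C → Dashv B C

/-- The index of the last coordinate (`r` in `1`-indexed notation). -/
def lastI (r : ℕ) (h : 0 < r) : Fin r := ⟨r - 1, by omega⟩

/-- `ρ = ((r-1)/2, (r-3)/2, …, (1-r)/2)`. -/
def rho (r : ℕ) : Fin r → ℝ := fun i => ((r : ℝ) - 1) / 2 - (i : ℝ)

/-- `σ · a`, where `(σ·a)_i = a_{σ⁻¹ i}`. -/
def permVec (σ : Equiv.Perm (Fin r)) (a : Fin r → ℝ) : Fin r → ℝ := fun i => a (σ⁻¹ i)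

/-- A nontrivial (ordered) partition `Π = (Π′, Π″)`, encoded by `Π′ = P`:
both parts nonempty and `r ∈ Π″`. -/
def NontrivPart (r : ℕ) (h : 0 < r) (P : Finset (Fin r)) : Prop :=
  P.Nonempty ∧ lastI r h ∉ P

/-- The wall `S_{Π,l} ⊆ V*`. -/
def wallSet (r : ℕ) (P : Finset (Fin r)) (l : ℤ) : Set (Fin r → ℝ) :=
  {c | (∑ i, c i) = 0 ∧ (∑ i ∈ P, c i) = (l : ℝ)}

/-- The simplex `Δ` of admissible parabolic weights. -/
def DeltaSet (r : ℕ) (h : 0 < r) : Set (Fin r → ℝ) :=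
  {c | (∑ i, c i) = 0 ∧ (∀ i j : Fin r, i < j → c j < c i) ∧
    c ⟨0, h⟩ - c (lastI r h) < 1}

/-- The chamber of a (regular) point `c ∈ V*`. -/
def chamberOf (r : ℕ) (c : Fin r → ℝ) : Set (Fin r → ℝ) :=
  {b | (∑ i, b i) = 0 ∧ IsRegular r b ∧ ∀ B, IsOB r B → intPart B b = intPart B c}

/-- `{i,j}` is an edge of `Tree(B)`. -/
def IsTreeEdge (B : Fin (r - 1) → Fin r → ℝ) (i j : Fin r) : Prop :=
  ∃ m, B m = stdRoot r i j ∨ B m = stdRoot r j i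

/-- `B` splits along the partition `Π` (with `Π′ = P`): exactly one edge of
`Tree(B)` joins `Π′` and `Π″`. -/
def SplitsAlong (B : Fin (r - 1) → Fin r → ℝ) (P : Finset (Fin r)) : Prop :=
  ∃! pr : Fin r × Fin r, pr.1 ∈ P ∧ pr.2 ∉ P ∧ IsTreeEdge B pr.1 pr.2

/-- The linking root `β_link = α^{pq}` with `p ∈ Π′`, `q ∈ Π″`. -/
def betaLink (B : Fin (r - 1) → Fin r → ℝ) (P : Finset (Fin r)) : Fin r → ℝ :=
  if h : ∃ pr : Fin r × Fin r, pr.1 ∈ P ∧ pr.2 ∉ P ∧ IsTreeEdge B pr.1 pr.2 then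
    stdRoot r h.choose.1 h.choose.2
  else 0


/-- The Hamiltonian ordered basis `H(σ) = (α^{σ(r−1),σ(r)}, …, α^{σ(1),σ(2)})`
(indices written `0`-based). -/
def ham (r : ℕ) (σ : Equiv.Perm (Fin r)) : Fin (r - 1) → Fin r → ℝ :=
  fun j => stdRoot r (σ ⟨r - 2 - (j : ℕ), by have := j.isLt; omega⟩)
    (σ ⟨r - 1 - (j : ℕ), by have := j.isLt; omega⟩)

/-- `ℋ_m = {H(σ) : σ(1) = m}`. -/
def hamSet (r : ℕ) (h : 0 < r) (m : Fin r) : Finset (Fin (r - 1) → Fin r → ℝ) :=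
  (Finset.univ.filter fun σ : Equiv.Perm (Fin r) => σ ⟨0, h⟩ = m).image (ham r)

section AuxVerlinde

variable {r : ℕ}

/-- The chain root `α^{σ(k),σ(k+1)}`. -/
def chainRoot (σ : Equiv.Perm (Fin r)) (k : Fin (r - 1)) : Fin r → ℝ :=
  stdRoot r (σ ⟨(k : ℕ), by have := k.isLt; omega⟩)
    (σ ⟨(k : ℕ) + 1, by have := k.isLt; omega⟩)

/-- Reversal of indices. -/
def rev (j : Fin (r - 1)) : Fin (r - 1) := ⟨r - 2 - (j : ℕ), by have := j.isLt; omega⟩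

lemma rev_rev (j : Fin (r - 1)) : rev (rev j) = j := by
  have hj := j.isLt
  exact Fin.ext (by simp only [rev]; omega)

lemma rev_injective : Function.Injective (rev (r := r)) :=
  Function.Involutive.injective rev_rev

lemma rev_surjective : Function.Surjective (rev (r := r)) :=
  Function.Involutive.surjective rev_rev

lemma ham_eq_chain (σ : Equiv.Perm (Fin r)) (j : Fin (r - 1)) :
    ham r σ j = chainRoot σ (rev j) := by
  have hj := j.isLt
  have e : (⟨r - 1 - (j : ℕ), by omega⟩ : Fin r) = ⟨r - 2 - (j : ℕ) + 1, by omega⟩ := by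
    simp only [Fin.mk.injEq]; omega
  show stdRoot r (σ ⟨r - 2 - (j : ℕ), by omega⟩) (σ ⟨r - 1 - (j : ℕ), by omega⟩)
      = stdRoot r (σ ⟨r - 2 - (j : ℕ), by omega⟩) (σ ⟨r - 2 - (j : ℕ) + 1, by omega⟩)
  rw [e]

/-- The partial-sum linear functional `a ↦ ∑_{s ≤ t} a (σ s)`. -/
def psumL (σ : Equiv.Perm (Fin r)) (t : ℕ) : (Fin r → ℝ) →ₗ[ℝ] ℝ where
  toFun a := ∑ s : Fin r, if (s : ℕ) ≤ t then a (σ s) else 0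
  map_add' a b := by
    show (∑ s : Fin r, if (s : ℕ) ≤ t then (a + b) (σ s) else 0) = _
    rw [← Finset.sum_add_distrib]
    exact Finset.sum_congr rfl fun s _ => by split_ifs <;> simp
  map_smul' c a := by
    show (∑ s : Fin r, if (s : ℕ) ≤ t then (c • a) (σ s) else 0) = _
    rw [RingHom.id_apply, smul_eq_mul, Finset.mul_sum]
    exact Finset.sum_congr rfl fun s _ => by split_ifs <;> simp

lemma psumL_stdRoot (σ : Equiv.Perm (Fin r)) (t : ℕ) (u w : Fin r) :
    psumL σ t (stdRoot r (σ u) (σ w)) =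
      (if (u : ℕ) ≤ t then (1 : ℝ) else 0) - (if (w : ℕ) ≤ t then (1 : ℝ) else 0) := by
  have key : ∀ v : Fin r,
      (∑ s : Fin r, if (s : ℕ) ≤ t then (if σ s = σ v then (1 : ℝ) else 0) else 0)
        = (if (v : ℕ) ≤ t then (1 : ℝ) else 0) := by
    intro v
    have h1 : ∀ s : Fin r, (if (s : ℕ) ≤ t then (if σ s = σ v then (1 : ℝ) else 0) else 0)
        = (if s = v then (if (v : ℕ) ≤ t then (1 : ℝ) else 0) else 0) := by
      intro s
      rcases eq_or_ne s v with h | h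
      · subst h; simp
      · simp [h, (Equiv.injective σ).ne h]
    rw [Finset.sum_congr rfl fun s _ => h1 s]
    simp
  show (∑ s : Fin r, if (s : ℕ) ≤ t then
      ((if σ s = σ u then (1:ℝ) else 0) - (if σ s = σ w then (1:ℝ) else 0)) else 0) = _
  have h2 : ∀ s : Fin r, (if (s : ℕ) ≤ t then
      ((if σ s = σ u then (1:ℝ) else 0) - (if σ s = σ w then (1:ℝ) else 0)) else 0)
      = (if (s : ℕ) ≤ t then (if σ s = σ u then (1:ℝ) else 0) else 0)
        - (if (s : ℕ) ≤ t then (if σ s = σ w then (1:ℝ) else 0) else 0) := by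
    intro s; split_ifs <;> simp
  rw [Finset.sum_congr rfl fun s _ => h2 s, Finset.sum_sub_distrib, key u, key w]

lemma psumL_chainRoot (σ : Equiv.Perm (Fin r)) (t : ℕ) (k : Fin (r - 1)) :
    psumL σ t (chainRoot σ k) =
      (if (k : ℕ) ≤ t then (1 : ℝ) else 0) - (if (k : ℕ) + 1 ≤ t then (1 : ℝ) else 0) :=
  psumL_stdRoot σ t _ _

lemma psumL_chainRoot_ne (σ : Equiv.Perm (Fin r)) {t k : Fin (r - 1)} (h : t ≠ k) :
    psumL σ (t : ℕ) (chainRoot σ k) = 0 := by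
  have hvk : (t : ℕ) ≠ (k : ℕ) := fun hv => h (Fin.ext hv)
  rw [psumL_chainRoot]
  split_ifs <;> [norm_num; omega; omega; norm_num]

lemma psumL_chainRoot_self (σ : Equiv.Perm (Fin r)) (k : Fin (r - 1)) :
    psumL σ (k : ℕ) (chainRoot σ k) = 1 := by
  rw [psumL_chainRoot]
  split_ifs <;> [omega; norm_num; omega; omega]

lemma chainRoot_li (σ : Equiv.Perm (Fin r)) : LinearIndependent ℝ (chainRoot σ) := by
  rw [Fintype.linearIndependent_iff]
  intro g hg i
  have h := congrArg (psumL σ (i : ℕ)) hg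
  rw [map_sum, map_zero] at h
  rw [Finset.sum_eq_single i (fun k _ hk => by
      rw [map_smul, smul_eq_mul, psumL_chainRoot_ne σ (Ne.symm hk), mul_zero])
    (fun hi => absurd (Finset.mem_univ i) hi)] at h
  rw [map_smul, smul_eq_mul, psumL_chainRoot_self, mul_one] at h
  exact h

lemma sum_chainRoot (σ : Equiv.Perm (Fin r)) (k : Fin (r - 1)) :
    (∑ x, chainRoot σ k x) = 0 := by
  simp [chainRoot, stdRoot, Finset.sum_sub_distrib]

lemma span_chainRoot (hr : 2 ≤ r) (σ : Equiv.Perm (Fin r)) :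
    ∀ a : Fin r → ℝ, (∑ i, a i) = 0 →
      a ∈ Submodule.span ℝ (Set.range (chainRoot σ)) := by
  classical
  set f : (Fin r → ℝ) →ₗ[ℝ] ℝ := ∑ i : Fin r, LinearMap.proj i with hf
  have hfa : ∀ a : Fin r → ℝ, f a = ∑ i, a i := fun a => by
    simp [hf, LinearMap.proj]
  have hrange : LinearMap.range f = ⊤ := by
    rw [LinearMap.range_eq_top]
    intro y
    refine ⟨fun i => if i = (⟨0, lt_of_lt_of_le two_pos hr⟩ : Fin r) then y else 0, ?_⟩
    rw [hfa]; simp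
  have hdim : Module.finrank ℝ (LinearMap.ker f) = r - 1 := by
    have h1 := LinearMap.finrank_range_add_finrank_ker f
    rw [hrange] at h1
    rw [finrank_top, Module.finrank_self] at h1
    have h2 : Module.finrank ℝ (Fin r → ℝ) = r := by simp
    omega
  have hle : Submodule.span ℝ (Set.range (chainRoot σ)) ≤ LinearMap.ker f := by
    rw [Submodule.span_le]
    rintro x ⟨k, rfl⟩
    rw [SetLike.mem_coe, LinearMap.mem_ker, hfa]
    exact sum_chainRoot σ k
  have hsp : Module.finrank ℝ (Submodule.span ℝ (Set.range (chainRoot σ))) = r - 1 := by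
    rw [finrank_span_eq_card (chainRoot_li σ)]; simp
  have heq : Submodule.span ℝ (Set.range (chainRoot σ)) = LinearMap.ker f :=
    Submodule.eq_of_le_of_finrank_le hle (by rw [hdim, hsp])
  intro a ha
  rw [heq, LinearMap.mem_ker, hfa]
  exact ha

end AuxVerlinde

lemma isOB_ham (hr : 2 ≤ r) (σ : Equiv.Perm (Fin r)) : IsOB r (ham r σ) := by
  have hham : ham r σ = chainRoot σ ∘ rev := funext fun j => ham_eq_chain σ j
  refine ⟨?_, ?_, ?_⟩
  · intro j
    have hj := j.isLt
    refine ⟨_, _, fun h => ?_, rfl⟩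
    have := Equiv.injective σ h
    rw [Fin.mk.injEq] at this
    omega
  · rw [hham]
    exact (chainRoot_li σ).comp rev rev_injective
  · intro a ha
    rw [hham, Function.Surjective.range_comp rev_surjective]
    exact span_chainRoot hr σ a ha

lemma stdRoot_inj {i j i' j' : Fin r} (hij : i ≠ j) (hij' : i' ≠ j')
    (h : stdRoot r i j = stdRoot r i' j') : i = i' ∧ j = j' := by
  have hi := congrFun h i
  have hj := congrFun h j
  have h1 : i = i' := by
    by_contra hne
    simp only [stdRoot, if_pos rfl, if_neg hij, if_neg hne] at hi
    split_ifs at hi <;> norm_num at hi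
  subst h1
  refine ⟨rfl, ?_⟩
  by_contra hne
  simp only [stdRoot, if_pos rfl, if_neg (Ne.symm hij), if_neg hne, if_neg hij'] at hj
  norm_num at hj

lemma ham_inj (hr : 2 ≤ r) {σ σ' : Equiv.Perm (Fin r)} (h : ham r σ = ham r σ') :
    σ = σ' := by
  have key : ∀ k : Fin (r - 1),
      σ ⟨(k : ℕ), by have := k.isLt; omega⟩ = σ' ⟨(k : ℕ), by have := k.isLt; omega⟩ ∧
      σ ⟨(k : ℕ) + 1, by have := k.isLt; omega⟩ = σ' ⟨(k : ℕ) + 1, by have := k.isLt; omega⟩ := by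
    intro k
    have hk : chainRoot σ k = chainRoot σ' k := by
      have := congrFun h (rev k)
      rwa [ham_eq_chain, ham_eq_chain, rev_rev] at this
    have hne1 : σ ⟨(k : ℕ), by have := k.isLt; omega⟩ ≠ σ ⟨(k : ℕ) + 1, by have := k.isLt; omega⟩ := by
      intro hc
      have := Equiv.injective σ hc
      rw [Fin.mk.injEq] at this
      omega
    have hne2 : σ' ⟨(k : ℕ), by have := k.isLt; omega⟩ ≠ σ' ⟨(k : ℕ) + 1, by have := k.isLt; omega⟩ := by
      intro hc
      have := Equiv.injective σ' hc
      rw [Fin.mk.injEq] at this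
      omega
    exact stdRoot_inj hne1 hne2 hk
  apply Equiv.ext
  intro s
  rcases lt_or_ge (s : ℕ) (r - 1) with hs | hs
  · have := (key ⟨(s : ℕ), hs⟩).1
    have hse : s = ⟨(s : ℕ), by omega⟩ := Fin.ext rfl
    rw [hse]
    exact this
  · have hse : s = ⟨(r - 2 : ℕ) + 1, by omega⟩ := Fin.ext (by have := s.isLt; simp; omega)
    have := (key ⟨r - 2, by omega⟩).2
    rw [hse]
    exact this

lemma card_filter_lt (m c : ℕ) (hc : c ≤ m) :
    (Finset.univ.filter fun i : Fin m => (i : ℕ) < c).card = c := by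
  have hb : (Finset.univ.filter fun i : Fin m => (i : ℕ) < c).card
      = (Finset.univ : Finset (Fin c)).card := by
    apply Finset.card_bij (fun (i : Fin m) hi => (⟨(i : ℕ), by
      simp only [Finset.mem_filter] at hi; exact hi.2⟩ : Fin c))
    · intro i hi; exact Finset.mem_univ _
    · intro i1 h1 i2 h2 hh
      rw [Fin.mk.injEq] at hh
      exact Fin.ext hh
    · intro b _
      refine ⟨⟨(b : ℕ), by omega⟩, ?_, rfl⟩
      simp only [Finset.mem_filter, Finset.mem_univ, true_and]
      exact b.isLt
  rw [hb, Finset.card_fin]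

lemma card_filter_le (m j : ℕ) (hj : j ≤ m) :
    (Finset.univ.filter fun i : Fin m => j ≤ (i : ℕ)).card = m - j := by
  classical
  have h1 := Finset.card_filter_add_card_filter_not
    (s := (Finset.univ : Finset (Fin m))) (p := fun i : Fin m => j ≤ (i : ℕ))
  have h2 : (Finset.univ.filter fun i : Fin m => ¬ j ≤ (i : ℕ))
      = Finset.univ.filter fun i : Fin m => (i : ℕ) < j := by
    apply Finset.filter_congr
    intro i _
    simp [Nat.not_le]
  rw [h2, card_filter_lt m j hj, Finset.card_fin] at h1
  omega

set_option maxHeartbeats 1600000 in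
lemma flag_eq_imp (hr : 2 ≤ r) (σ σ' : Equiv.Perm (Fin r))
    (h0 : σ ⟨0, lt_of_lt_of_le two_pos hr⟩ = σ' ⟨0, lt_of_lt_of_le two_pos hr⟩)
    (τ : Equiv.Perm (Fin (r - 1)))
    (heq : flagOf (ham r σ ∘ τ) = flagOf (ham r σ')) : σ = σ' := by
  classical
  set Kj : ℕ → Finset (Fin (r - 1)) := fun j =>
    (Finset.univ.filter fun i : Fin (r - 1) => j ≤ (i : ℕ)).image fun i => rev (τ i)
    with hKj
  -- cardinality of Kj
  have hKcard : ∀ j : ℕ, j ≤ r - 1 → (Kj j).card = r - 1 - j := by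
    intro j hj
    show ((Finset.univ.filter fun i : Fin (r - 1) => j ≤ (i : ℕ)).image fun i => rev (τ i)).card
        = r - 1 - j
    rw [Finset.card_image_of_injective _
      (fun a b hab => Equiv.injective τ (rev_injective hab) :
        Function.Injective fun i => rev (τ i))]
    exact card_filter_le (r - 1) j hj
  -- antitone
  have hKmono : ∀ j j' : ℕ, j ≤ j' → Kj j' ⊆ Kj j := by
    intro j j' hjj
    apply Finset.image_subset_image
    intro i hi
    simp only [Finset.mem_filter, Finset.mem_univ, true_and] at hi ⊢
    omega
  -- membership criterion
  have hcrit : ∀ (j : ℕ) (hj : j < r - 1) (t : Fin (r - 1)), t ∉ Kj j →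
      ∀ a ∈ flagOf (ham r σ ∘ τ) ⟨j, hj⟩, psumL σ (t : ℕ) a = 0 := by
    intro j hj t ht a ha
    have hsub : flagOf (ham r σ ∘ τ) ⟨j, hj⟩ ≤ LinearMap.ker (psumL σ (t : ℕ)) := by
      rw [flagOf, Submodule.span_le]
      rintro x ⟨i, hi, rfl⟩
      rw [SetLike.mem_coe, LinearMap.mem_ker]
      show psumL σ (t : ℕ) (ham r σ (τ i)) = 0
      rw [ham_eq_chain]
      apply psumL_chainRoot_ne
      intro hte
      apply ht
      rw [hKj]
      simp only [Finset.mem_image, Finset.mem_filter, Finset.mem_univ, true_and]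
      exact ⟨i, hi, hte.symm⟩
    exact hsub ha
  -- main induction
  have main : ∀ n : ℕ, n ≤ r - 1 →
      (∀ s : Fin r, (s : ℕ) ≤ n → σ' s = σ s) ∧
      (∀ k : Fin (r - 1), (k : ℕ) < n → k ∈ Kj (r - 1 - n)) := by
    intro n
    induction n with
    | zero =>
      intro _
      constructor
      · intro s hs
        have : s = ⟨0, lt_of_lt_of_le two_pos hr⟩ := Fin.ext (by simp only [Fin.val_mk]; omega)
        rw [this, h0]
      · intro k hk; omega
    | succ n ih =>
      intro hn1
      obtain ⟨ihσ, ihK⟩ := ih (by omega)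
      set j : ℕ := r - 2 - n with hjdef
      have hjv : j < r - 1 := by omega
      set nfin : Fin r := ⟨n, by omega⟩ with hnfin
      set n1fin : Fin r := ⟨n + 1, by omega⟩ with hn1fin
      -- g = ham r σ' ⟨j, hjv⟩ in std form
      have hg : ham r σ' ⟨j, hjv⟩ = stdRoot r (σ' nfin) (σ' n1fin) := by
        simp only [ham]
        have e1 : (⟨r - 2 - j, by omega⟩ : Fin r) = nfin := by
          rw [hnfin]; simp only [Fin.mk.injEq]; omega
        have e2 : (⟨r - 1 - j, by omega⟩ : Fin r) = n1fin := by
          rw [hn1fin]; simp only [Fin.mk.injEq]; omega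
        rw [e1, e2]
      set w : Fin r := σ.symm (σ' n1fin) with hwdef
      have hw : σ w = σ' n1fin := Equiv.apply_symm_apply σ _
      have hwn : n < (w : ℕ) := by
        by_contra hc
        push_neg at hc
        have h1 : σ' w = σ w := ihσ w hc
        rw [hw] at h1
        have := Equiv.injective σ' h1
        rw [hn1fin] at this
        have := congrArg Fin.val this
        simp at this
        omega
      have hσn : σ' nfin = σ nfin := ihσ nfin (by rw [hnfin])
      -- g is in the flag
      have hgmem : ham r σ' ⟨j, hjv⟩ ∈ flagOf (ham r σ ∘ τ) ⟨j, hjv⟩ := by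
        rw [heq, flagOf]
        exact Submodule.subset_span ⟨⟨j, hjv⟩, le_refl _, rfl⟩
      -- everything in [n, w) is in Kj j
      have hin : ∀ t : Fin (r - 1), n ≤ (t : ℕ) → (t : ℕ) < (w : ℕ) → t ∈ Kj j := by
        intro t ht1 ht2
        by_contra htc
        have h1 := hcrit j hjv t htc _ hgmem
        rw [hg, hσn, ← hw, psumL_stdRoot] at h1
        have hnv : (nfin : ℕ) = n := rfl
        rw [hnv, if_pos ht1, if_neg (by omega)] at h1
        norm_num at h1
      -- everything below w is in Kj j
      have hbelow : ∀ t : Fin (r - 1), (t : ℕ) < (w : ℕ) → t ∈ Kj j := by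
        intro t ht
        rcases lt_or_ge (t : ℕ) n with h | h
        · exact hKmono j (r - 1 - n) (by omega) (ihK t h)
        · exact hin t h ht
      -- cardinality forces w = n + 1
      have hwcard : (w : ℕ) ≤ n + 1 := by
        have hsubs : (Finset.univ.filter fun t : Fin (r - 1) => (t : ℕ) < (w : ℕ)) ⊆ Kj j := by
          intro t ht
          simp only [Finset.mem_filter, Finset.mem_univ, true_and] at ht
          exact hbelow t ht
        have h1 := Finset.card_le_card hsubs
        rw [card_filter_lt (r - 1) (w : ℕ) (by have := w.isLt; omega), hKcard j (by omega)] at h1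
        omega
      have hweq : w = n1fin := Fin.ext (by rw [hn1fin]; simp only [Fin.val_mk]; omega)
      have hσn1 : σ' n1fin = σ n1fin := by rw [← hw, hweq]
      constructor
      · intro s hs
        rcases lt_or_ge (s : ℕ) (n + 1) with h | h
        · exact ihσ s (by omega)
        · have : s = n1fin := Fin.ext (by rw [hn1fin]; simp only [Fin.val_mk]; omega)
          rw [this, hσn1]
      · intro k hk
        have hj2 : r - 1 - (n + 1) = j := by omega
        rw [hj2]
        apply hbelow
        rw [hweq, hn1fin]
        simp only [Fin.val_mk]
        omega
  obtain ⟨hσ, -⟩ := main (r - 1) le_rfl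
  exact (Equiv.ext fun s => hσ s (by have := s.isLt; omega)).symm

lemma card_fiber (hr : 2 ≤ r) (m : Fin r) :
    (Finset.univ.filter fun σ : Equiv.Perm (Fin r) => σ ⟨0, lt_of_lt_of_le two_pos hr⟩ = m).card
      = (r - 1).factorial := by
  classical
  have hconst : ∀ m' : Fin r,
      (Finset.univ.filter fun σ : Equiv.Perm (Fin r) => σ ⟨0, lt_of_lt_of_le two_pos hr⟩ = m').card
        = (Finset.univ.filter fun σ : Equiv.Perm (Fin r) => σ ⟨0, lt_of_lt_of_le two_pos hr⟩ = m).card := by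
    intro m'
    apply Finset.card_bij (fun σ _ => Equiv.swap m' m * σ)
    · intro σ hσ
      simp only [Finset.mem_filter, Finset.mem_univ, true_and] at hσ ⊢
      rw [Equiv.Perm.mul_apply, hσ, Equiv.swap_apply_left]
    · intro σ1 _ σ2 _ h
      exact mul_left_cancel h
    · intro σ hσ
      simp only [Finset.mem_filter, Finset.mem_univ, true_and] at hσ
      refine ⟨Equiv.swap m' m * σ, ?_, ?_⟩
      · simp only [Finset.mem_filter, Finset.mem_univ, true_and]
        rw [Equiv.Perm.mul_apply, hσ, Equiv.swap_apply_right]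
      · rw [← mul_assoc, Equiv.swap_mul_self, one_mul]
  have hsum : ∑ m' : Fin r,
      (Finset.univ.filter fun σ : Equiv.Perm (Fin r) => σ ⟨0, lt_of_lt_of_le two_pos hr⟩ = m').card
        = (Finset.univ : Finset (Equiv.Perm (Fin r))).card :=
    (Finset.card_eq_sum_card_fiberwise fun σ _ => Finset.mem_univ (σ ⟨0, lt_of_lt_of_le two_pos hr⟩)).symm
  rw [Finset.sum_congr rfl fun m' _ => hconst m'] at hsum
  rw [Finset.sum_const, Finset.card_univ, Finset.card_univ, Fintype.card_perm,
    Fintype.card_fin, smul_eq_mul] at hsum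
  have hfac : r * (r - 1).factorial = r.factorial := Nat.mul_factorial_pred (by omega)
  have := hsum.trans hfac.symm
  exact Nat.eq_of_mul_eq_mul_left (by omega) this

/-- Each `ℋ_m` has `(r−1)!` elements and is a diagonal basis. -/
theorem hamiltonian_basis_is_diagonal
    (r : ℕ) (hr : 2 ≤ r) (m : Fin r) :
    (hamSet r (by omega) m).card = (r - 1).factorial ∧
      IsDiagonalBasis r (hamSet r (by omega) m) := by
  classical
  have h0 : (0 : ℕ) < r := by omega
  have hcard : (hamSet r (by omega) m).card = (r - 1).factorial := by
    rw [hamSet, Finset.card_image_of_injOn fun a _ b _ h => ham_inj hr h]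
    exact card_fiber hr m
  refine ⟨hcard, hcard, ?_, ?_⟩
  · intro B hB
    rw [hamSet, Finset.mem_image] at hB
    obtain ⟨σ, -, rfl⟩ := hB
    exact isOB_ham hr σ
  · intro B hB C hC hBC τ hflag
    rw [hamSet, Finset.mem_image] at hB hC
    obtain ⟨σ, hσ, rfl⟩ := hB
    obtain ⟨σ', hσ', rfl⟩ := hC
    rw [Finset.mem_filter] at hσ hσ'
    have h00 : σ ⟨0, by omega⟩ = σ' ⟨0, by omega⟩ := by rw [hσ.2, hσ'.2]
    exact hBC (congrArg (ham r) (flag_eq_imp hr σ σ' h00 τ hflag))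

end Verlinde
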